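/- The rational guarded formal power series S^rat⟨⟨Σ*_Φ⟩⟩ over a finite copo-semiring S form a Kleene S-algebra with tests, where the tests are the series 1_K for K ⊆ At(Φ) (value 1 on atoms in K, 0 elsewhere), with complement 1_K^bar = 1_{At(Φ)\K}, star r*(w) = Σ_{n} r^n(w), and scalar action (r ⊙ s)(w) = r(w)·s. -/

import Mathlib

/-- A guarded string `G₁a₁G₂…a_{k-1}G_k`: a list of atoms interleaved with a list of
letters, with one more atom than letters. -/
structure GuardedString (A B : Type*) where
  atoms : List A
  letters : List B
  len : atoms.length = letters.length + 1

namespace GuardedString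

variable {A B : Type*}

theorem atoms_ne_nil (σ : GuardedString A B) : σ.atoms ≠ [] := by
  intro h
  have hlen := σ.len
  rw [h] at hlen
  simp at hlen

/-- The head (first atom) of a guarded string. -/
def hd (σ : GuardedString A B) : A := σ.atoms.head σ.atoms_ne_nil

/-- The tail (last atom) of a guarded string. -/
def tl (σ : GuardedString A B) : A := σ.atoms.getLast σ.atoms_ne_nil

/-- The fusion product: defined when `tl σ = hd τ`, joining the two strings and
identifying the shared atom; undefined (`none`) otherwise. -/
def fuse [DecidableEq A] (σ τ : GuardedString A B) : Option (GuardedString A B) :=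
  if σ.tl = τ.hd then
    some ⟨σ.atoms ++ τ.atoms.tail, σ.letters ++ τ.letters, by
      simp [List.length_append, List.length_tail, σ.len, τ.len]; omega⟩
  else none

/-- The guarded string consisting of a single atom. -/
def ofAtom (G : A) : GuardedString A B := ⟨[G], [], by simp⟩

end GuardedString

namespace GuardedString

/-- The prefix of a guarded string consisting of the first `i` letters (and `i+1` atoms). -/
def takeGS {A B : Type*} (w : GuardedString A B) (i : ℕ) : GuardedString A B :=
  ⟨w.atoms.take (i + 1), w.letters.take i, by simp [w.len] <;> omega⟩

/-- The suffix of a guarded string obtained by dropping the first `i` letters. -/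
def dropGS {A B : Type*} (w : GuardedString A B) (i : ℕ) : GuardedString A B :=
  ⟨w.atoms.drop (min i w.letters.length), w.letters.drop i, by simp [w.len]; omega⟩

end GuardedString

/-- The Cauchy product of guarded formal power series:
`(r₁·r₂)(w) = Σ {r₁(u)·r₂(v) : w = u ⋄ v}`, realized by summing over all
factorizations of `w` (one for each split position of its letters). -/
def gmul {A B S : Type*} [Semiring S] (r₁ r₂ : GuardedString A B → S) :
    GuardedString A B → S := fun w =>
  ∑ i ∈ Finset.range (w.letters.length + 1), r₁ (w.takeGS i) * r₂ (w.dropGS i)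

/-- Pointwise addition of guarded formal power series. -/
def gadd {A B S : Type*} [Semiring S] (r₁ r₂ : GuardedString A B → S) :
    GuardedString A B → S := fun w => r₁ w + r₂ w

/-- The zero guarded series. -/
def gzero {A B S : Type*} [Semiring S] : GuardedString A B → S := fun _ => 0

/-- The unit guarded series: value `1` on atoms, `0` elsewhere. -/
def gone {A B S : Type*} [Semiring S] : GuardedString A B → S :=
  fun w => if w.letters.isEmpty then 1 else 0

/-- Powers of a guarded series under the Cauchy product. -/
def gpow {A B S : Type*} [Semiring S] (r : GuardedString A B → S) :
    ℕ → GuardedString A B → S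
  | 0 => gone
  | n + 1 => gmul (gpow r n) r

/-- The scalar action `(r ⊙ s)(w) = r(w) · s`. -/
def gsmul {A B S : Type*} [Semiring S] (r : GuardedString A B → S) (s : S) :
    GuardedString A B → S := fun w => r w * s

/-- The test series `1_K` for a set of atoms `K`: value `1` on atoms in `K`,
`0` elsewhere. -/
def gtest {A B S : Type*} [DecidableEq A] [Semiring S] (K : Finset A) :
    GuardedString A B → S :=
  fun w => if w.letters.isEmpty ∧ w.hd ∈ K then 1 else 0

/-- The rational guarded formal power series: the least class containing the
polynomials (finitely supported series) and closed under the rational operations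
(here `st` is the star operation). -/
inductive Rational {A B S : Type*} [Semiring S]
    (st : (GuardedString A B → S) → GuardedString A B → S) :
    (GuardedString A B → S) → Prop
  | poly (r : GuardedString A B → S) : {w | r w ≠ 0}.Finite → Rational st r
  | add {r₁ r₂} : Rational st r₁ → Rational st r₂ → Rational st (gadd r₁ r₂)
  | mul {r₁ r₂} : Rational st r₁ → Rational st r₂ → Rational st (gmul r₁ r₂)
  | star {r} : Rational st r → Rational st (st r)
  | smul {r} (s : S) : Rational st r → Rational st (gsmul r s)


section Helpers

open GuardedString Finset

variable {A B S : Type*}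

lemma gs_ext {σ τ : GuardedString A B} (h1 : σ.atoms = τ.atoms)
    (h2 : σ.letters = τ.letters) : σ = τ := by
  cases σ; cases τ; simp_all

lemma letters_takeGS (w : GuardedString A B) (i : ℕ) :
    (w.takeGS i).letters = w.letters.take i := rfl

lemma letters_dropGS (w : GuardedString A B) (i : ℕ) :
    (w.dropGS i).letters = w.letters.drop i := rfl

lemma atoms_takeGS (w : GuardedString A B) (i : ℕ) :
    (w.takeGS i).atoms = w.atoms.take (i + 1) := rfl

lemma atoms_dropGS (w : GuardedString A B) (i : ℕ) :
    (w.dropGS i).atoms = w.atoms.drop (min i w.letters.length) := rfl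

lemma len_takeGS (w : GuardedString A B) {i : ℕ} (h : i ≤ w.letters.length) :
    (w.takeGS i).letters.length = i := by
  simp [letters_takeGS, h]

lemma len_dropGS (w : GuardedString A B) (i : ℕ) :
    (w.dropGS i).letters.length = w.letters.length - i := by
  simp [letters_dropGS]

lemma dropGS_zero (w : GuardedString A B) : w.dropGS 0 = w :=
  gs_ext (by simp [atoms_dropGS]) rfl

lemma takeGS_len (w : GuardedString A B) : w.takeGS w.letters.length = w := by
  refine gs_ext ?_ (by simp [letters_takeGS])
  rw [atoms_takeGS, ← w.len, List.take_length]

lemma takeGS_takeGS (w : GuardedString A B) {i j : ℕ} (hij : i ≤ j) :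
    (w.takeGS j).takeGS i = w.takeGS i := by
  refine gs_ext ?_ ?_ <;>
    simp [atoms_takeGS, letters_takeGS, List.take_take, Nat.min_eq_left, hij,
      Nat.succ_le_succ hij]

lemma dropGS_takeGS (w : GuardedString A B) {i j : ℕ} (hij : i ≤ j)
    (hj : j ≤ w.letters.length) :
    (w.takeGS j).dropGS i = (w.dropGS i).takeGS (j - i) := by
  have hi : i ≤ w.letters.length := le_trans hij hj
  refine gs_ext ?_ ?_
  · rw [atoms_dropGS, atoms_takeGS, atoms_takeGS, atoms_dropGS,
      len_takeGS w hj, Nat.min_eq_left hij, Nat.min_eq_left hi,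
      List.drop_take]
    congr 1
    omega
  · rw [letters_dropGS, letters_takeGS, letters_takeGS, letters_dropGS,
      List.drop_take]

lemma dropGS_dropGS (w : GuardedString A B) {i j : ℕ} (hij : i ≤ j)
    (hj : j ≤ w.letters.length) :
    (w.dropGS i).dropGS (j - i) = w.dropGS j := by
  have hi : i ≤ w.letters.length := le_trans hij hj
  refine gs_ext ?_ ?_
  · rw [atoms_dropGS, atoms_dropGS, atoms_dropGS, len_dropGS,
      Nat.min_eq_left hi, Nat.min_eq_left (by omega : j - i ≤ w.letters.length - i),
      Nat.min_eq_left hj, List.drop_drop]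
    congr 1
    omega
  · rw [letters_dropGS, letters_dropGS, letters_dropGS, List.drop_drop]
    congr 1
    omega

lemma tri_sum {M : Type*} [AddCommMonoid M] (n : ℕ) (f : ℕ → ℕ → M) :
    ∑ j ∈ Finset.range (n + 1), ∑ i ∈ Finset.range (j + 1), f i j
      = ∑ i ∈ Finset.range (n + 1), ∑ k ∈ Finset.range (n - i + 1), f i (i + k) := by
  rw [Finset.sum_sigma', Finset.sum_sigma']
  refine Finset.sum_nbij' (fun p => ⟨p.2, p.1 - p.2⟩) (fun p => ⟨p.1 + p.2, p.1⟩)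
    ?_ ?_ ?_ ?_ ?_
  · rintro ⟨j, i⟩ h
    simp only [Finset.mem_sigma, Finset.mem_range] at *
    omega
  · rintro ⟨i, k⟩ h
    simp only [Finset.mem_sigma, Finset.mem_range] at *
    omega
  · rintro ⟨j, i⟩ h
    simp only [Finset.mem_sigma, Finset.mem_range] at h
    simp only [Sigma.mk.inj_iff]
    constructor
    · omega
    · exact heq_of_eq (by omega)
  · rintro ⟨i, k⟩ h
    simp only [Finset.mem_sigma, Finset.mem_range] at h
    simp only [Sigma.mk.inj_iff]
    constructor
    · trivial
    · exact heq_of_eq (by omega)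
  · rintro ⟨j, i⟩ h
    simp only [Finset.mem_sigma, Finset.mem_range] at h
    simp only
    congr 1
    omega

section SemiringLemmas

variable [CommSemiring S]

lemma gadd_comm (p q : GuardedString A B → S) : gadd p q = gadd q p := by
  funext w; simp [gadd, add_comm]

lemma gadd_assoc (p q r : GuardedString A B → S) :
    gadd (gadd p q) r = gadd p (gadd q r) := by
  funext w; simp [gadd, add_assoc]

lemma gzero_gadd (p : GuardedString A B → S) : gadd gzero p = p := by
  funext w; simp [gadd, gzero]

lemma gmul_assoc (p q r : GuardedString A B → S) :
    gmul (gmul p q) r = gmul p (gmul q r) := by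
  funext w
  show ∑ j ∈ Finset.range (w.letters.length + 1), gmul p q (w.takeGS j) * r (w.dropGS j)
      = ∑ i ∈ Finset.range (w.letters.length + 1), p (w.takeGS i) * gmul q r (w.dropGS i)
  have lhs :
      ∑ j ∈ Finset.range (w.letters.length + 1), gmul p q (w.takeGS j) * r (w.dropGS j)
        = ∑ j ∈ Finset.range (w.letters.length + 1), ∑ i ∈ Finset.range (j + 1),
            p (w.takeGS i) * q ((w.dropGS i).takeGS (j - i)) * r (w.dropGS j) := by
    refine Finset.sum_congr rfl ?_
    intro j hj
    rw [Finset.mem_range] at hj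
    have hj' : j ≤ w.letters.length := by omega
    unfold gmul
    rw [len_takeGS w hj', Finset.sum_mul]
    refine Finset.sum_congr rfl ?_
    intro i hi
    rw [Finset.mem_range] at hi
    have hij : i ≤ j := by omega
    rw [takeGS_takeGS w hij, dropGS_takeGS w hij hj']
  have rhs :
      ∑ i ∈ Finset.range (w.letters.length + 1), p (w.takeGS i) * gmul q r (w.dropGS i)
        = ∑ i ∈ Finset.range (w.letters.length + 1), ∑ k ∈ Finset.range (w.letters.length - i + 1),
            p (w.takeGS i) * q ((w.dropGS i).takeGS k) * r ((w.dropGS i).dropGS k) := by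
    refine Finset.sum_congr rfl ?_
    intro i hi
    rw [Finset.mem_range] at hi
    unfold gmul
    rw [len_dropGS, Finset.mul_sum]
    refine Finset.sum_congr rfl ?_
    intro k hk
    rw [mul_assoc]
  rw [lhs, rhs, tri_sum]
  refine Finset.sum_congr rfl ?_
  intro i hi
  rw [Finset.mem_range] at hi
  refine Finset.sum_congr rfl ?_
  intro k hk
  rw [Finset.mem_range] at hk
  have h1 : i ≤ i + k := Nat.le_add_right i k
  have h2 : i + k ≤ w.letters.length := by omega
  rw [← dropGS_dropGS w h1 h2, show i + k - i = k by omega]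

lemma gone_gmul (p : GuardedString A B → S) : gmul gone p = p := by
  funext w
  unfold gmul
  rw [Finset.sum_eq_single 0]
  · have ht : (w.takeGS 0).letters = [] := by simp [letters_takeGS]
    rw [dropGS_zero]
    simp [gone, ht]
  · intro i hi hne
    have : ¬ (w.takeGS i).letters.isEmpty := by
      rw [letters_takeGS, List.isEmpty_iff, List.take_eq_nil_iff]
      rintro (h | h)
      · exact hne h
      · rw [Finset.mem_range, h] at hi
        simp at hi
        exact hne hi
    simp [gone, this]
  · intro h
    simp at h

lemma gmul_gone (p : GuardedString A B → S) : gmul p gone = p := by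
  funext w
  unfold gmul
  rw [Finset.sum_eq_single w.letters.length]
  · have ht : (w.dropGS w.letters.length).letters = [] := by
      simp [letters_dropGS]
    rw [takeGS_len]
    simp [gone, ht]
  · intro i hi hne
    have : ¬ (w.dropGS i).letters.isEmpty := by
      rw [letters_dropGS, List.isEmpty_iff, List.drop_eq_nil_iff]
      rw [Finset.mem_range] at hi
      omega
    simp [gone, this]
  · intro h
    simp at h

lemma gmul_gadd (p q r : GuardedString A B → S) :
    gmul p (gadd q r) = gadd (gmul p q) (gmul p r) := by
  funext w
  simp [gmul, gadd, mul_add, Finset.sum_add_distrib]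

lemma gadd_gmul (p q r : GuardedString A B → S) :
    gmul (gadd p q) r = gadd (gmul p r) (gmul q r) := by
  funext w
  simp [gmul, gadd, add_mul, Finset.sum_add_distrib]

lemma gzero_gmul (p : GuardedString A B → S) : gmul gzero p = gzero := by
  funext w; simp [gmul, gzero]

lemma gmul_gzero (p : GuardedString A B → S) : gmul p gzero = gzero := by
  funext w; simp [gmul, gzero]

lemma gpow_succ_left (r : GuardedString A B → S) (n : ℕ) :
    gpow r (n + 1) = gmul r (gpow r n) := by
  induction n with
  | zero => show gmul gone r = gmul r gone; rw [gone_gmul, gmul_gone]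
  | succ n ih =>
      show gmul (gpow r (n + 1)) r = gmul r (gmul (gpow r n) r)
      rw [ih, gmul_assoc]

end SemiringLemmas

end Helpers


section Helpers2

open GuardedString Finset

variable {A B S : Type*} [CommSemiring S]

lemma sum_absorb {ι : Type*} (s : Finset ι) (f : ι → S) (c : S)
    (h : ∀ i ∈ s, f i + c = c) : (∑ i ∈ s, f i) + c = c := by
  classical
  induction s using Finset.induction_on with
  | empty => simp
  | @insert a s ha ih =>
      rw [Finset.sum_insert ha, add_assoc,
        ih (fun i hi => h i (Finset.mem_insert_of_mem hi)),
        h a (Finset.mem_insert_self a s)]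

variable (st : (GuardedString A B → S) → GuardedString A B → S)
  (hst : ∀ (r : GuardedString A B → S) (w : GuardedString A B),
    ∃ N : ℕ, ∀ m ≥ N, (∑ i ∈ Finset.range (m + 1), gpow r i w) = st r w)

include hst in
lemma st_sum_right (q p : GuardedString A B → S) (w : GuardedString A B) :
    ∃ N : ℕ, ∀ m ≥ N,
      gmul q (st p) w = ∑ k ∈ Finset.range (m + 1), gmul q (gpow p k) w := by
  classical
  refine ⟨(Finset.range (w.letters.length + 1)).sup
    (fun i => Classical.choose (hst p (w.dropGS i))), ?_⟩
  intro m hm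
  unfold gmul
  have h : ∀ i ∈ Finset.range (w.letters.length + 1),
      q (w.takeGS i) * st p (w.dropGS i)
        = ∑ k ∈ Finset.range (m + 1), q (w.takeGS i) * gpow p k (w.dropGS i) := by
    intro i hi
    rw [← Classical.choose_spec (hst p (w.dropGS i)) m
      (le_trans (Finset.le_sup (f := fun i => Classical.choose (hst p (w.dropGS i))) hi)
        hm), Finset.mul_sum]
  rw [Finset.sum_congr rfl h, Finset.sum_comm]

include hst in
lemma st_sum_left (p q : GuardedString A B → S) (w : GuardedString A B) :
    ∃ N : ℕ, ∀ m ≥ N,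
      gmul (st p) q w = ∑ k ∈ Finset.range (m + 1), gmul (gpow p k) q w := by
  classical
  refine ⟨(Finset.range (w.letters.length + 1)).sup
    (fun i => Classical.choose (hst p (w.takeGS i))), ?_⟩
  intro m hm
  unfold gmul
  have h : ∀ i ∈ Finset.range (w.letters.length + 1),
      st p (w.takeGS i) * q (w.dropGS i)
        = ∑ k ∈ Finset.range (m + 1), gpow p k (w.takeGS i) * q (w.dropGS i) := by
    intro i hi
    rw [← Classical.choose_spec (hst p (w.takeGS i)) m
      (le_trans (Finset.le_sup (f := fun i => Classical.choose (hst p (w.takeGS i))) hi)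
        hm), Finset.sum_mul]
  rw [Finset.sum_congr rfl h, Finset.sum_comm]

include hst in
lemma st_unfold_left (p : GuardedString A B → S) :
    gadd gone (gmul p (st p)) = st p := by
  funext w
  obtain ⟨N0, h0⟩ := hst p w
  obtain ⟨N1, h1⟩ := st_sum_right st hst p p w
  set M := max N0 N1 with hM
  have e1 : gmul p (st p) w = ∑ k ∈ Finset.range (M + 1), gmul p (gpow p k) w :=
    h1 M (le_max_right _ _)
  show gone w + gmul p (st p) w = st p w
  rw [e1, Finset.sum_congr rfl
    (fun k _ => by rw [← gpow_succ_left] : ∀ k ∈ Finset.range (M + 1),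
      gmul p (gpow p k) w = gpow p (k + 1) w)]
  rw [← h0 (M + 1) (by omega), Finset.sum_range_succ' (fun k => gpow p k w) (M + 1)]
  rw [add_comm]
  rfl

include hst in
lemma st_unfold_right (p : GuardedString A B → S) :
    gadd gone (gmul (st p) p) = st p := by
  funext w
  obtain ⟨N0, h0⟩ := hst p w
  obtain ⟨N1, h1⟩ := st_sum_left st hst p p w
  set M := max N0 N1 with hM
  have e1 : gmul (st p) p w = ∑ k ∈ Finset.range (M + 1), gmul (gpow p k) p w :=
    h1 M (le_max_right _ _)
  show gone w + gmul (st p) p w = st p w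
  rw [e1]
  have e2 : ∀ k ∈ Finset.range (M + 1), gmul (gpow p k) p w = gpow p (k + 1) w :=
    fun k _ => rfl
  rw [Finset.sum_congr rfl e2]
  rw [← h0 (M + 1) (by omega), Finset.sum_range_succ' (fun k => gpow p k w) (M + 1)]
  rw [add_comm]
  rfl

include hst in
lemma st_ind_left (hid : ∀ x : S, x + x = x) (p q r : GuardedString A B → S)
    (h : gadd (gadd q (gmul p r)) r = r) : gadd (gmul (st p) q) r = r := by
  have hpt : ∀ w, (q w + gmul p r w) + r w = r w := fun w => congrFun h w
  have hq : ∀ w, q w + r w = r w := by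
    intro w
    calc q w + r w = q w + ((q w + gmul p r w) + r w) := by rw [hpt w]
      _ = ((q w + q w) + gmul p r w) + r w := by ring
      _ = (q w + gmul p r w) + r w := by rw [hid (q w)]
      _ = r w := hpt w
  have hpr : ∀ w, gmul p r w + r w = r w := by
    intro w
    calc gmul p r w + r w = gmul p r w + ((q w + gmul p r w) + r w) := by rw [hpt w]
      _ = (q w + (gmul p r w + gmul p r w)) + r w := by ring
      _ = (q w + gmul p r w) + r w := by rw [hid (gmul p r w)]
      _ = r w := hpt w
  have mono : ∀ (a : GuardedString A B → S), (∀ w, a w + r w = r w) →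
      ∀ w, gmul p a w + gmul p r w = gmul p r w := by
    intro a ha w
    unfold gmul
    rw [← Finset.sum_add_distrib]
    refine Finset.sum_congr rfl ?_
    intro i _
    rw [← mul_add, ha]
  have key : ∀ k, ∀ w, gmul (gpow p k) q w + r w = r w := by
    intro k
    induction k with
    | zero =>
        intro w
        rw [show gmul (gpow p 0) q = q from gone_gmul q]
        exact hq w
    | succ k ih =>
        intro w
        have e : gmul (gpow p (k + 1)) q = gmul p (gmul (gpow p k) q) := by
          rw [gpow_succ_left, gmul_assoc]
        rw [e]
        have h1 := mono (gmul (gpow p k) q) ih w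
        calc gmul p (gmul (gpow p k) q) w + r w
            = gmul p (gmul (gpow p k) q) w + (gmul p r w + r w) := by rw [hpr w]
          _ = (gmul p (gmul (gpow p k) q) w + gmul p r w) + r w := by ring
          _ = gmul p r w + r w := by rw [h1]
          _ = r w := hpr w
  funext w
  show gmul (st p) q w + r w = r w
  obtain ⟨N, hN⟩ := st_sum_left st hst p q w
  rw [hN N le_rfl]
  exact sum_absorb _ _ _ (fun k _ => key k w)

include hst in
lemma st_ind_right (hid : ∀ x : S, x + x = x) (p q r : GuardedString A B → S)
    (h : gadd (gadd q (gmul r p)) r = r) : gadd (gmul q (st p)) r = r := by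
  have hpt : ∀ w, (q w + gmul r p w) + r w = r w := fun w => congrFun h w
  have hq : ∀ w, q w + r w = r w := by
    intro w
    calc q w + r w = q w + ((q w + gmul r p w) + r w) := by rw [hpt w]
      _ = ((q w + q w) + gmul r p w) + r w := by ring
      _ = (q w + gmul r p w) + r w := by rw [hid (q w)]
      _ = r w := hpt w
  have hpr : ∀ w, gmul r p w + r w = r w := by
    intro w
    calc gmul r p w + r w = gmul r p w + ((q w + gmul r p w) + r w) := by rw [hpt w]
      _ = (q w + (gmul r p w + gmul r p w)) + r w := by ring
      _ = (q w + gmul r p w) + r w := by rw [hid (gmul r p w)]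
      _ = r w := hpt w
  have mono : ∀ (a : GuardedString A B → S), (∀ w, a w + r w = r w) →
      ∀ w, gmul a p w + gmul r p w = gmul r p w := by
    intro a ha w
    unfold gmul
    rw [← Finset.sum_add_distrib]
    refine Finset.sum_congr rfl ?_
    intro i _
    rw [← add_mul, ha]
  have key : ∀ k, ∀ w, gmul q (gpow p k) w + r w = r w := by
    intro k
    induction k with
    | zero =>
        intro w
        rw [show gmul q (gpow p 0) = q from gmul_gone q]
        exact hq w
    | succ k ih =>
        intro w
        have e : gmul q (gpow p (k + 1)) = gmul (gmul q (gpow p k)) p := by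
          show gmul q (gmul (gpow p k) p) = _
          rw [gmul_assoc]
        rw [e]
        have h1 := mono (gmul q (gpow p k)) ih w
        calc gmul (gmul q (gpow p k)) p w + r w
            = gmul (gmul q (gpow p k)) p w + (gmul r p w + r w) := by rw [hpr w]
          _ = (gmul (gmul q (gpow p k)) p w + gmul r p w) + r w := by ring
          _ = gmul r p w + r w := by rw [h1]
          _ = r w := hpr w
  funext w
  show gmul q (st p) w + r w = r w
  obtain ⟨N, hN⟩ := st_sum_right st hst q p w
  rw [hN N le_rfl]
  exact sum_absorb _ _ _ (fun k _ => key k w)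

lemma takeGS_zero_of_nil {w : GuardedString A B} (hw : w.letters = []) :
    w.takeGS 0 = w := by
  refine gs_ext ?_ ?_
  · rw [atoms_takeGS, show (0 : ℕ) + 1 = w.atoms.length by rw [w.len, hw]; rfl,
      List.take_length]
  · rw [letters_takeGS, hw]
    rfl

lemma gpow_gsmul_gone (s : S) (n : ℕ) (w : GuardedString A B) :
    gpow (gsmul gone s) n w = if w.letters.isEmpty then s ^ n else 0 := by
  induction n generalizing w with
  | zero =>
      show gone w = _
      unfold gone
      split <;> simp_all
  | succ n ih =>
      show gmul (gpow (gsmul gone s) n) (gsmul gone s) w = _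
      by_cases hw : w.letters = []
      · have hlen : w.letters.length = 0 := by simp [hw]
        unfold gmul
        rw [hlen, Finset.sum_range_one, takeGS_zero_of_nil hw, dropGS_zero, ih w]
        simp [gsmul, gone, hw, pow_succ]
      · have hz : ∀ i ∈ Finset.range (w.letters.length + 1),
            gpow (gsmul gone s) n (w.takeGS i) * gsmul gone s (w.dropGS i) = 0 := by
          intro i hi
          rcases Nat.eq_zero_or_pos i with h0 | h0
          · subst h0
            have hd : (w.dropGS 0).letters ≠ [] := by rw [dropGS_zero]; exact hw
            simp [gsmul, gone, List.isEmpty_iff, hd]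
          · have ht : (w.takeGS i).letters ≠ [] := by
              rw [letters_takeGS]
              intro hc
              rcases List.take_eq_nil_iff.mp hc with h | h
              · omega
              · exact hw h
            rw [ih, if_neg (by simp only [List.isEmpty_iff]; exact ht), zero_mul]
        unfold gmul
        rw [Finset.sum_eq_zero hz]
        simp [List.isEmpty_iff, hw]

include hst in
lemma st_smul (hid : ∀ x : S, x + x = x) (sstar : S → S)
    (hsstar : ∀ s : S, ∃ N : ℕ, ∀ m ≥ N,
      (∑ i ∈ Finset.range (m + 1), s ^ i) = sstar s) (s : S) :
    gadd (gsmul (gone (A := A) (B := B)) (sstar s)) (st (gsmul gone s))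
      = st (gsmul gone s) := by
  funext w
  show gsmul gone (sstar s) w + st (gsmul gone s) w = st (gsmul gone s) w
  obtain ⟨N0, h0⟩ := hst (gsmul gone s) w
  by_cases hw : w.letters = []
  · obtain ⟨N1, h1⟩ := hsstar s
    set M := max N0 N1 with hM
    have e : st (gsmul gone s) w = sstar s := by
      rw [← h0 M (le_max_left _ _), ← h1 M (le_max_right _ _)]
      refine Finset.sum_congr rfl ?_
      intro k _
      rw [gpow_gsmul_gone]
      simp [hw]
    rw [e]
    show (if w.letters.isEmpty then (1:S) else 0) * sstar s + sstar s = sstar s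
    simp only [hw, List.isEmpty_nil, if_true, one_mul]
    exact hid _
  · have e : st (gsmul gone s) w = 0 := by
      rw [← h0 N0 le_rfl]
      refine Finset.sum_eq_zero ?_
      intro k _
      rw [gpow_gsmul_gone]
      simp [List.isEmpty_iff, hw]
    rw [e]
    show (if w.letters.isEmpty then (1:S) else 0) * sstar s + 0 = 0
    simp [List.isEmpty_iff, hw]

end Helpers2

section Helpers3

open GuardedString Finset

variable {A B S : Type*} [CommSemiring S]

lemma gsmul_gadd (p q : GuardedString A B → S) (s : S) :
    gsmul (gadd p q) s = gadd (gsmul p s) (gsmul q s) :=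
  funext fun _ => add_mul _ _ _

lemma gsmul_addS (p : GuardedString A B → S) (s t : S) :
    gsmul p (s + t) = gadd (gsmul p s) (gsmul p t) :=
  funext fun _ => mul_add _ _ _

lemma gsmul_mulS (p : GuardedString A B → S) (s t : S) :
    gsmul p (s * t) = gsmul (gsmul p s) t :=
  funext fun _ => (mul_assoc _ _ _).symm

lemma gsmul_oneS (p : GuardedString A B → S) : gsmul p (1 : S) = p :=
  funext fun _ => mul_one _

lemma gsmul_zeroS (p : GuardedString A B → S) : gsmul p (0 : S) = gzero :=
  funext fun _ => mul_zero _

lemma gzero_gsmul (s : S) : gsmul (gzero (A := A) (B := B)) s = gzero :=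
  funext fun _ => zero_mul _

lemma gsmul_gmul_right (p q : GuardedString A B → S) (s : S) :
    gsmul (gmul p q) s = gmul p (gsmul q s) := by
  funext w
  unfold gsmul gmul
  rw [Finset.sum_mul]
  exact Finset.sum_congr rfl fun i _ => mul_assoc _ _ _

lemma gsmul_gmul_left (p q : GuardedString A B → S) (s : S) :
    gsmul (gmul p q) s = gmul (gsmul p s) q := by
  funext w
  unfold gsmul gmul
  rw [Finset.sum_mul]
  exact Finset.sum_congr rfl fun i _ => by ring

lemma fin_empty_letters [Fintype A] :
    {w : GuardedString A B | w.letters = []}.Finite := by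
  have h : {w : GuardedString A B | w.letters = []}
      ⊆ GuardedString.ofAtom '' Set.univ := by
    intro w hw
    have hw' : w.letters = [] := hw
    have hl : w.atoms.length = 1 := by
      have := w.len
      rw [hw'] at this
      simpa using this
    obtain ⟨a, ha⟩ := List.length_eq_one_iff.mp hl
    refine ⟨a, Set.mem_univ a, ?_⟩
    exact gs_ext (show (GuardedString.ofAtom a : GuardedString A B).atoms = w.atoms
      from ha.symm) (show (GuardedString.ofAtom a : GuardedString A B).letters = w.letters
      from hw'.symm)
  exact Set.Finite.subset (Set.finite_univ.image _) h

lemma fin_supp_of_atomic [Fintype A] (f : GuardedString A B → S)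
    (hf : ∀ w : GuardedString A B, w.letters ≠ [] → f w = 0) :
    {w | f w ≠ 0}.Finite := by
  refine fin_empty_letters.subset ?_
  intro w hw
  by_contra h
  exact hw (hf w h)

lemma gone_atomic (w : GuardedString A B) (hw : w.letters ≠ []) :
    (gone w : S) = 0 := by
  simp [gone, List.isEmpty_iff, hw]

lemma gtest_atomic [DecidableEq A] (K : Finset A) (w : GuardedString A B)
    (hw : w.letters ≠ []) : (gtest K w : S) = 0 := by
  simp [gtest, List.isEmpty_iff, hw]

lemma gtest_mul [DecidableEq A] (K K' : Finset A) :
    gmul (gtest (B := B) (S := S) K) (gtest K') = gtest (K ∩ K') := by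
  funext w
  by_cases hw : w.letters = []
  · have hlen : w.letters.length = 0 := by simp [hw]
    show (∑ i ∈ Finset.range (w.letters.length + 1), _) = _
    rw [hlen, Finset.sum_range_one, takeGS_zero_of_nil hw, dropGS_zero]
    unfold gtest
    simp only [hw, List.isEmpty_nil, true_and, Finset.mem_inter]
    by_cases h1 : w.hd ∈ K <;> by_cases h2 : w.hd ∈ K' <;> simp [h1, h2]
  · have hz : ∀ i ∈ Finset.range (w.letters.length + 1),
        gtest (B := B) (S := S) K (w.takeGS i) * gtest K' (w.dropGS i) = 0 := by
      intro i hi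
      rcases Nat.eq_zero_or_pos i with h0 | h0
      · subst h0
        have hd : (w.dropGS 0).letters ≠ [] := by rw [dropGS_zero]; exact hw
        rw [gtest_atomic K' _ hd, mul_zero]
      · have ht : (w.takeGS i).letters ≠ [] := by
          rw [letters_takeGS]
          intro hc
          rcases List.take_eq_nil_iff.mp hc with h | h
          · omega
          · exact hw h
        rw [gtest_atomic K _ ht, zero_mul]
    show (∑ i ∈ Finset.range (w.letters.length + 1), _) = _
    rw [Finset.sum_eq_zero hz, gtest_atomic (K ∩ K') w hw]

lemma gtest_add [DecidableEq A] (hid : ∀ x : S, x + x = x) (K K' : Finset A) :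
    gadd (gtest (B := B) (S := S) K) (gtest K') = gtest (K ∪ K') := by
  funext w
  show gtest K w + gtest K' w = gtest (K ∪ K') w
  by_cases hw : w.letters = []
  · unfold gtest
    simp only [hw, List.isEmpty_nil, true_and, Finset.mem_union]
    by_cases h1 : w.hd ∈ K <;> by_cases h2 : w.hd ∈ K' <;> simp [h1, h2]
    exact hid 1
  · rw [gtest_atomic K _ hw, gtest_atomic K' _ hw, gtest_atomic _ _ hw, add_zero]

lemma gtest_univ [Fintype A] [DecidableEq A] :
    gtest (B := B) (S := S) (Finset.univ : Finset A) = gone := by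
  funext w
  show (if w.letters.isEmpty ∧ w.hd ∈ (Finset.univ : Finset A) then (1:S) else 0)
    = if w.letters.isEmpty then 1 else 0
  rw [if_congr (show (w.letters.isEmpty = true ∧ w.hd ∈ (Finset.univ : Finset A))
    ↔ (w.letters.isEmpty = true) by simp) rfl rfl]

lemma gtest_empty [DecidableEq A] :
    gtest (B := B) (S := S) (∅ : Finset A) = gzero := by
  funext w
  simp [gtest, gzero]

end Helpers3

/-- Over a finite copo-semiring `S`, the rational guarded formal power series form
a Kleene `S`-algebra with tests: they satisfy the idempotent-semiring and Kleene
algebra axioms, the right `S`-semimodule and compatibility laws for the scalar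
action, the axiom `1 ⊙ s* ≤ (1 ⊙ s)*`, and the tests `1_K` (for `K ⊆ At(Φ)`)
form a Boolean algebra of elements below `1`. Here `st` is any star operation
satisfying `(st r)(w) = Σ_n r^n(w)` (the eventually-constant partial sums), and
`sstar` is the star of the finite semiring `S`. -/
theorem stmt16 {A B S : Type*} [Fintype A] [DecidableEq A]
    [CommSemiring S] [Fintype S] [PartialOrder S]
    (hid : ∀ x : S, x + x = x)
    (hadd_mono : ∀ a b c d : S, a ≤ b → c ≤ d → a + c ≤ b + d)
    (hmul_mono : ∀ a b c d : S, a ≤ b → c ≤ d → a * c ≤ b * d)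
    (hzero_le : ∀ s : S, (0 : S) ≤ s)
    (st : (GuardedString A B → S) → GuardedString A B → S)
    (hst : ∀ (r : GuardedString A B → S) (w : GuardedString A B),
      ∃ N : ℕ, ∀ m ≥ N, (∑ i ∈ Finset.range (m + 1), gpow r i w) = st r w)
    (sstar : S → S)
    (hsstar : ∀ s : S, ∃ N : ℕ, ∀ m ≥ N,
      (∑ i ∈ Finset.range (m + 1), s ^ i) = sstar s) :
    let R : (GuardedString A B → S) → Prop := Rational st
    let le : (GuardedString A B → S) → (GuardedString A B → S) → Prop :=
      fun r₁ r₂ => gadd r₁ r₂ = r₂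
    -- tests, units and the unit series are rational
    (R gzero ∧ R gone ∧ ∀ K : Finset A, R (gtest (B := B) (S := S) K)) ∧
    -- idempotent semiring axioms
    (∀ p q, R p → R q → gadd p q = gadd q p) ∧
    (∀ p q r, R p → R q → R r → gadd (gadd p q) r = gadd p (gadd q r)) ∧
    (∀ p, R p → gadd gzero p = p) ∧
    (∀ p, R p → gadd p p = p) ∧
    (∀ p q r, R p → R q → R r → gmul (gmul p q) r = gmul p (gmul q r)) ∧
    (∀ p, R p → gmul gone p = p) ∧
    (∀ p, R p → gmul p gone = p) ∧
    (∀ p q r, R p → R q → R r → gmul p (gadd q r) = gadd (gmul p q) (gmul p r)) ∧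
    (∀ p q r, R p → R q → R r → gmul (gadd p q) r = gadd (gmul p r) (gmul q r)) ∧
    (∀ p, R p → gmul gzero p = gzero) ∧
    (∀ p, R p → gmul p gzero = gzero) ∧
    -- Kleene algebra axioms for the star
    (∀ p, R p → gadd gone (gmul p (st p)) = st p) ∧
    (∀ p, R p → gadd gone (gmul (st p) p) = st p) ∧
    (∀ p q r, R p → R q → R r → le (gadd q (gmul p r)) r → le (gmul (st p) q) r) ∧
    (∀ p q r, R p → R q → R r → le (gadd q (gmul r p)) r → le (gmul q (st p)) r) ∧
    -- right S-semimodule axioms and compatibility of the scalar action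
    (∀ p q (s : S), R p → R q →
      gsmul (gadd p q) s = gadd (gsmul p s) (gsmul q s)) ∧
    (∀ p (s t : S), R p → gsmul p (s + t) = gadd (gsmul p s) (gsmul p t)) ∧
    (∀ p (s t : S), R p → gsmul p (s * t) = gsmul (gsmul p s) t) ∧
    (∀ p, R p → gsmul p (1 : S) = p) ∧
    (∀ p, R p → gsmul p (0 : S) = gzero) ∧
    (∀ s : S, gsmul (gzero (A := A) (B := B)) s = gzero) ∧
    (∀ p q (s : S), R p → R q → gsmul (gmul p q) s = gmul p (gsmul q s)) ∧
    (∀ p q (s : S), R p → R q → gsmul (gmul p q) s = gmul (gsmul p s) q) ∧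
    (∀ s : S, le (gsmul (gone (A := A) (B := B)) (sstar s)) (st (gsmul gone s))) ∧
    -- the tests form a Boolean algebra with complement 1_{At \ K}
    (∀ K K' : Finset A, gmul (gtest (B := B) (S := S) K) (gtest K') = gtest (K ∩ K')) ∧
    (∀ K K' : Finset A, gadd (gtest (B := B) (S := S) K) (gtest K') = gtest (K ∪ K')) ∧
    (∀ K : Finset A, gmul (gtest (B := B) (S := S) K) (gtest Kᶜ) = gzero) ∧
    (∀ K : Finset A, gadd (gtest (B := B) (S := S) K) (gtest Kᶜ) = gone) ∧
    (gtest (B := B) (S := S) (Finset.univ : Finset A) = gone) ∧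
    (gtest (B := B) (S := S) (∅ : Finset A) = gzero) := by
  intro R le
  classical
  refine ⟨⟨?_, ?_, ?_⟩, ?_, ?_, ?_, ?_, ?_, ?_, ?_, ?_, ?_, ?_, ?_, ?_, ?_, ?_,
    ?_, ?_, ?_, ?_, ?_, ?_, ?_, ?_, ?_, ?_, ?_, ?_, ?_, ?_, ?_, ?_⟩
  · exact Rational.poly _ (fin_supp_of_atomic _ (fun w _ => rfl))
  · exact Rational.poly _ (fin_supp_of_atomic _ gone_atomic)
  · exact fun K => Rational.poly _ (fin_supp_of_atomic _ (gtest_atomic K))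
  · exact fun p q _ _ => gadd_comm p q
  · exact fun p q r _ _ _ => gadd_assoc p q r
  · exact fun p _ => gzero_gadd p
  · intro p _
    funext w
    exact hid (p w)
  · exact fun p q r _ _ _ => gmul_assoc p q r
  · exact fun p _ => gone_gmul p
  · exact fun p _ => gmul_gone p
  · exact fun p q r _ _ _ => gmul_gadd p q r
  · exact fun p q r _ _ _ => gadd_gmul p q r
  · exact fun p _ => gzero_gmul p
  · exact fun p _ => gmul_gzero p
  · exact fun p _ => st_unfold_left st hst p
  · exact fun p _ => st_unfold_right st hst p
  · exact fun p q r _ _ _ h => st_ind_left st hst hid p q r h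
  · exact fun p q r _ _ _ h => st_ind_right st hst hid p q r h
  · exact fun p q s _ _ => gsmul_gadd p q s
  · exact fun p s t _ => gsmul_addS p s t
  · exact fun p s t _ => gsmul_mulS p s t
  · exact fun p _ => gsmul_oneS p
  · exact fun p _ => gsmul_zeroS p
  · exact fun s => gzero_gsmul s
  · exact fun p q s _ _ => gsmul_gmul_right p q s
  · exact fun p q s _ _ => gsmul_gmul_left p q s
  · exact fun s => st_smul st hst hid sstar hsstar s
  · exact fun K K' => gtest_mul K K'
  · exact fun K K' => gtest_add hid K K'
  · intro K
    rw [gtest_mul, Finset.inter_compl]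
    exact gtest_empty
  · intro K
    rw [gtest_add hid, Finset.union_compl]
    exact gtest_univ
  · exact gtest_univ
  · exact gtest_empty
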